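/- arXiv:2410.18484 — 6 statements merged into one kernel-verified Lean document; each statement's English description precedes it below -/
import Mathlib

section
/- Let x₀ ∈ X = {x | Cx ≤ b} and define J(x₀) and X_r(x₀) via a safety margin α with α_j > 0 for all j. For a point y ∈ X, define the sphere Δ = {x | ‖x − y‖₂ ≤ c} where c = min over j ∉ J(x₀) of (b_j − C_j y)/‖C_j‖₂ (with c = +∞ if J(x₀) covers all indices, and assume each C_j ≠ 0). Then X_r(x₀) ∩ Δ ⊆ X, and y ∈ Δ. -/
open scoped RealInnerProductSpace

/-- with Δ a Euclidean ball around y ∈ X of radius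
c = min_{j ∉ J(x₀)} (b_j − ⟪C_j, y⟫)/‖C_j‖ (interpreted in EReal, so c = +∞ when
J(x₀) covers all indices), we have X_r(x₀) ∩ Δ ⊆ X and y ∈ Δ. -/
theorem ball_delta_set_valid
    {n nx : ℕ} (C : Fin nx → EuclideanSpace ℝ (Fin n)) (b α : Fin nx → ℝ)
    (hα : ∀ j, 0 < α j) (hC : ∀ j, C j ≠ 0)
    (x₀ : EuclideanSpace ℝ (Fin n)) (hx₀ : ∀ j, ⟪C j, x₀⟫ ≤ b j)
    (y : EuclideanSpace ℝ (Fin n)) (hy : ∀ j, ⟪C j, y⟫ ≤ b j)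
    (c : EReal)
    (hc : c = sInf ((fun j => (((b j - ⟪C j, y⟫) / ‖C j‖ : ℝ) : EReal)) ''
      {j | ¬ (⟪C j, x₀⟫ > b j - α j)})) :
    ({x : EuclideanSpace ℝ (Fin n) |
        ∀ j ∈ {j | ⟪C j, x₀⟫ > b j - α j}, ⟪C j, x⟫ ≤ b j} ∩
      {x : EuclideanSpace ℝ (Fin n) | ((‖x - y‖ : ℝ) : EReal) ≤ c} ⊆
        {x : EuclideanSpace ℝ (Fin n) | ∀ j, ⟪C j, x⟫ ≤ b j}) ∧
    y ∈ {x : EuclideanSpace ℝ (Fin n) | ((‖x - y‖ : ℝ) : EReal) ≤ c} := by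
  constructor
  · rintro x ⟨hx1, hx2⟩ j
    by_cases hj : ⟪C j, x₀⟫ > b j - α j
    · exact hx1 j hj
    · -- j ∉ J(x₀): c ≤ (b j - ⟪C j, y⟫)/‖C j‖
      have hCj : (0 : ℝ) < ‖C j‖ := norm_pos_iff.mpr (hC j)
      have hle : ((‖x - y‖ : ℝ) : EReal) ≤
          (((b j - ⟪C j, y⟫) / ‖C j‖ : ℝ) : EReal) := by
        refine le_trans hx2 ?_
        rw [hc]
        exact sInf_le ⟨j, hj, rfl⟩
      have hreal : ‖x - y‖ ≤ (b j - ⟪C j, y⟫) / ‖C j‖ := by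
        exact_mod_cast hle
      have hmul : ‖C j‖ * ‖x - y‖ ≤ b j - ⟪C j, y⟫ := by
        rw [le_div_iff₀ hCj] at hreal; linarith
      have hinner : ⟪C j, x - y⟫ ≤ ‖C j‖ * ‖x - y‖ :=
        (real_inner_le_norm _ _).trans' (le_refl _) |>.trans (le_refl _)
      have : ⟪C j, x⟫ = ⟪C j, y⟫ + ⟪C j, x - y⟫ := by
        rw [inner_sub_right]; ring
      linarith [real_inner_le_norm (C j) (x - y)]
  · show ((‖y - y‖ : ℝ) : EReal) ≤ c
    simp only [sub_self, norm_zero]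
    rw [hc]
    refine le_sInf ?_
    rintro z ⟨j, hj, rfl⟩
    have hCj : (0 : ℝ) < ‖C j‖ := norm_pos_iff.mpr (hC j)
    have h0 : (0 : ℝ) ≤ (b j - ⟪C j, y⟫) / ‖C j‖ :=
      div_nonneg (by linarith [hy j]) hCj.le
    show (0 : EReal) ≤ (((b j - ⟪C j, y⟫) / ‖C j‖ : ℝ) : EReal)
    exact_mod_cast h0
end

section
/- Theorem 1 (recursive feasibility under controlled invariance): Assume X is controlled invariant for f with input set U, and suppose for all x ∈ X the set Δ(x) satisfies (1) X_r(x) ∩ Δ(x) ⊆ X and (2) there exists ū ∈ U with f(x, ū) ∈ X_r(x) ∩ Δ(x). Then the feasible set of the reduced MPC problem, X_F^r = {x ∈ X | there exist u_0,…,u_{N−1} ∈ U with states x_0 = x, x_{i+1} = f(x_i, u_i), x_1 ∈ X_r(x) ∩ Δ(x), and x_i ∈ X_r(x) for i = 2,…,N}, equals X. -/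
/-- Theorem 1, feasibility: under controlled invariance of X and the two
conditions on Δ, the feasible set of the reduced MPC problem equals X. -/
theorem ca_mpc_feasible_set_eq
    {n m : ℕ} (f : (Fin n → ℝ) → (Fin m → ℝ) → (Fin n → ℝ))
    (X : Set (Fin n → ℝ)) (U : Set (Fin m → ℝ)) (N : ℕ) (hN : 1 ≤ N)
    (Xr Δ : (Fin n → ℝ) → Set (Fin n → ℝ))
    (hXr : ∀ x ∈ X, X ⊆ Xr x)
    (hCI : ∀ x ∈ X, ∃ u ∈ U, f x u ∈ X)
    (hΔ1 : ∀ x ∈ X, Xr x ∩ Δ x ⊆ X)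
    (hΔ2 : ∀ x ∈ X, ∃ u ∈ U, f x u ∈ Xr x ∩ Δ x) :
    {x | x ∈ X ∧ ∃ (xs : ℕ → (Fin n → ℝ)) (us : ℕ → (Fin m → ℝ)),
        xs 0 = x ∧ (∀ i < N, us i ∈ U) ∧
        (∀ i < N, xs (i + 1) = f (xs i) (us i)) ∧
        xs 1 ∈ Xr x ∩ Δ x ∧
        (∀ i, 2 ≤ i → i ≤ N → xs i ∈ Xr x)} = X := by
  ext x
  simp only [Set.mem_setOf_eq]
  constructor
  · rintro ⟨hx, -⟩; exact hx
  · intro hx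
    refine ⟨hx, ?_⟩
    obtain ⟨u0, hu0U, hu0⟩ := hΔ2 x hx
    have hx1 : f x u0 ∈ X := hΔ1 x hx hu0
    choose g hgU hgX using hCI
    let p : ℕ → {y // y ∈ X} := fun k =>
      Nat.rec ⟨f x u0, hx1⟩ (fun _ ih => ⟨f ih.1 (g ih.1 ih.2), hgX ih.1 ih.2⟩) k
    refine ⟨fun i => Nat.rec x (fun k _ => (p k).1) i,
            fun i => Nat.rec u0 (fun k _ => g (p k).1 (p k).2) i, rfl, ?_, ?_, ?_, ?_⟩
    · intro i _
      cases i with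
      | zero => exact hu0U
      | succ k => exact hgU _ _
    · intro i _
      cases i with
      | zero => rfl
      | succ k => rfl
    · exact hu0
    · intro i h2 _
      obtain ⟨k, rfl⟩ : ∃ k, i = k + 1 := ⟨i - 1, by omega⟩
      exact hXr x hx (p k).2
end

section
/- Under the hypotheses of Theorem 1 (X controlled invariant; for all x ∈ X, X_r(x) ∩ Δ(x) ⊆ X and there exists ū ∈ U with f(x, ū) ∈ X_r(x) ∩ Δ(x)), any state x₁ produced as the first predicted state of a feasible solution of the reduced MPC problem at x ∈ X satisfies x₁ ∈ X; consequently, for any selection u = K(x) ∈ U with f(x, K(x)) ∈ X_r(x) ∩ Δ(x), the closed-loop trajectory x_{k+1} = f(x_k, K(x_k)) starting from x₀ ∈ X satisfies x_k ∈ X for all k ∈ ℕ. -/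
/-- Theorem 1, constraint satisfaction: the first predicted state of
any feasible solution lies in X, and the closed loop under any feasible feedback K
stays in X. -/
theorem ca_mpc_constraint_satisfaction
    {n m : ℕ} (f : (Fin n → ℝ) → (Fin m → ℝ) → (Fin n → ℝ))
    (X : Set (Fin n → ℝ)) (U : Set (Fin m → ℝ))
    (Xr Δ : (Fin n → ℝ) → Set (Fin n → ℝ))
    (hCI : ∀ x ∈ X, ∃ u ∈ U, f x u ∈ X)
    (hΔ1 : ∀ x ∈ X, Xr x ∩ Δ x ⊆ X)
    (hΔ2 : ∀ x ∈ X, ∃ u ∈ U, f x u ∈ Xr x ∩ Δ x)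
    (K : (Fin n → ℝ) → (Fin m → ℝ))
    (hK : ∀ x ∈ X, K x ∈ U ∧ f x (K x) ∈ Xr x ∩ Δ x) :
    (∀ x ∈ X, ∀ x₁ ∈ Xr x ∩ Δ x, x₁ ∈ X) ∧
    (∀ xs : ℕ → (Fin n → ℝ), xs 0 ∈ X →
      (∀ k, xs (k + 1) = f (xs k) (K (xs k))) → ∀ k, xs k ∈ X) := by
  refine ⟨fun x hx x₁ hx₁ => hΔ1 x hx hx₁, fun xs h0 hstep k => ?_⟩
  induction k with
  | zero => exact h0
  | succ k ih =>
    rw [hstep k]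
    exact hΔ1 _ ih (hK _ ih).2
end

section
/- Theorem 2, recursive feasibility part: Under the hypotheses of Theorem 2 (X_T ⊆ X controlled invariant, and for all (x̃₁,…,x̃_N) ∈ S: X_r(x̃_i) ∩ Δ(x̃_i) ⊆ X and x̃_i ∈ Δ(x̃_i) for i = 2,…,N), any feasible state trajectory (x₁,…,x_N) of the reduced terminal-set MPC problem parameterized by a sequence in S itself belongs to S. -/
/-- The set S of dynamically feasible state sequences of length N
(indexed by 0,…,N−1, i.e. `xs i` represents x̃_{i+1}) that stay in X and end in X_T. -/
def feasSeqSet {n m : ℕ} (f : (Fin n → ℝ) → (Fin m → ℝ) → (Fin n → ℝ))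
    (X : Set (Fin n → ℝ)) (U : Set (Fin m → ℝ)) (XT : Set (Fin n → ℝ)) (N : ℕ) :
    Set (ℕ → (Fin n → ℝ)) :=
  {xs | (∀ i < N, xs i ∈ X) ∧ xs (N - 1) ∈ XT ∧
    ∃ us : ℕ → (Fin m → ℝ), ∀ i, i + 1 < N → us i ∈ U ∧ xs (i + 1) = f (xs i) (us i)}

/-- Theorem 2, recursive feasibility: any feasible state trajectory
(x₁,…,x_N) of the reduced terminal-set MPC problem parameterized by a sequence in S
itself belongs to S.  (The parameter `xt i` is x̃_{i+1}; the trajectory is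
`fun j => xs (j+1)`, i.e. (x₁,…,x_N).) -/
theorem ca_mpc_terminal_recursive_feasibility
    {n m : ℕ} (f : (Fin n → ℝ) → (Fin m → ℝ) → (Fin n → ℝ))
    (X : Set (Fin n → ℝ)) (U : Set (Fin m → ℝ)) (XT : Set (Fin n → ℝ))
    (N : ℕ) (hN : 2 ≤ N) (hsub : XT ⊆ X)
    (hCI : ∀ x ∈ XT, ∃ u ∈ U, f x u ∈ XT)
    (Xr Δ : (Fin n → ℝ) → Set (Fin n → ℝ))
    (hΔ : ∀ xt ∈ feasSeqSet f X U XT N, ∀ i, 1 ≤ i → i < N →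
      Xr (xt i) ∩ Δ (xt i) ⊆ X ∧ xt i ∈ Δ (xt i))
    (xt : ℕ → (Fin n → ℝ)) (hxt : xt ∈ feasSeqSet f X U XT N)
    (us : ℕ → (Fin m → ℝ)) (xs : ℕ → (Fin n → ℝ))
    (h0 : xs 0 = xt 0)
    (hdyn : ∀ i < N, us i ∈ U ∧ xs (i + 1) = f (xs i) (us i))
    (hstate : ∀ i, 1 ≤ i → i < N → xs i ∈ Xr (xt i) ∩ Δ (xt i))
    (hterm : xs N ∈ XT) :
    (fun j => xs (j + 1)) ∈ feasSeqSet f X U XT N := by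
  refine ⟨?_, ?_, fun i => us (i + 1), ?_⟩
  · intro i hi
    rcases lt_or_eq_of_le (Nat.succ_le_of_lt hi) with h | h
    · exact (hΔ xt hxt (i + 1) (Nat.le_add_left 1 i) h).1
        (hstate (i + 1) (Nat.le_add_left 1 i) h)
    · have h' : i + 1 = N := h
      simp only []
      rw [h']; exact hsub hterm
  · have hNe : N - 1 + 1 = N := Nat.succ_pred_eq_of_pos (Nat.lt_of_lt_of_le (by norm_num) hN)
    simpa [hNe] using hterm
  · intro i hi
    exact hdyn (i + 1) hi
end

section
/- Let X = {x | Cx ≤ b} with α ≥ 0 and J, X_r as usual. For a sequence X_k = (x₂,…,x_N) of states, define J_c(X_k) = {1,…,n_x} \ ⋂_{i=2}^N J(x_i) and X_c(X_k) = {x | C_j x ≤ b_j, j ∈ J_c(X_k)}. If a set Δ ⊆ X_c(X_k), then for every i ∈ {2,…,N}, X_r(x_i) ∩ Δ ⊆ X. -/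
open Matrix

/-- with J_c(X_k) = {1,…,n_x} \ ⋂_{i=2}^N J(x_i) and
X_c(X_k) the corresponding polyhedron, if Δ ⊆ X_c(X_k), then
X_r(x_i) ∩ Δ ⊆ X for every i ∈ {2,…,N}. -/
theorem delta_in_complement_polyhedron
    {n nx : ℕ} (C : Fin nx → (Fin n → ℝ)) (b α : Fin nx → ℝ)
    (hα : ∀ j, 0 ≤ α j) (N : ℕ) (hN : 2 ≤ N)
    (xt : ℕ → (Fin n → ℝ)) (Δ : Set (Fin n → ℝ))
    (hΔ : Δ ⊆ {x : Fin n → ℝ |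
      ∀ j ∈ (Set.univ \ ⋂ i ∈ Set.Icc 2 N, {j | C j ⬝ᵥ xt i > b j - α j} :
        Set (Fin nx)), C j ⬝ᵥ x ≤ b j}) :
    ∀ i ∈ Set.Icc 2 N,
      {x : Fin n → ℝ | ∀ j ∈ {j | C j ⬝ᵥ xt i > b j - α j}, C j ⬝ᵥ x ≤ b j} ∩ Δ ⊆
        {x : Fin n → ℝ | ∀ j, C j ⬝ᵥ x ≤ b j} := by
  intro i hi x hx j
  by_cases h : j ∈ ⋂ i ∈ Set.Icc 2 N, {j | C j ⬝ᵥ xt i > b j - α j}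
  · exact hx.1 j (Set.mem_iInter₂.mp h i hi)
  · exact hΔ hx.2 j ⟨Set.mem_univ j, h⟩
end

section
/- Let X_F^T(x₀) = {x₀ ∈ X | ∃ (u_0,…,u_{N−1}) ∈ Uᴺ with x_{i+1} = f(x_i,u_i), x_i ∈ X for i = 1,…,N−1, and x_N ∈ X_T} be the feasible set of the terminal-set MPC problem. If X_T ⊆ X is controlled invariant for f with input set U and x₀ ∈ X_F^T, then for any feasible trajectory the successor state x₁ satisfies x₁ ∈ X_F^T (recursive feasibility of standard terminal-set MPC). -/
/-- The feasible set of the standard terminal-set MPC problem. -/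
def terminalFeasSet {n m : ℕ} (f : (Fin n → ℝ) → (Fin m → ℝ) → (Fin n → ℝ))
    (X : Set (Fin n → ℝ)) (U : Set (Fin m → ℝ)) (XT : Set (Fin n → ℝ)) (N : ℕ) :
    Set (Fin n → ℝ) :=
  {x | x ∈ X ∧ ∃ (xs : ℕ → (Fin n → ℝ)) (us : ℕ → (Fin m → ℝ)),
    xs 0 = x ∧ (∀ i < N, us i ∈ U ∧ xs (i + 1) = f (xs i) (us i)) ∧
    (∀ i, 1 ≤ i → i < N → xs i ∈ X) ∧ xs N ∈ XT}

/-- recursive feasibility of standard terminal-set MPC: for any feasible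
trajectory from x₀ ∈ X_F^T, the successor state x₁ is again in X_F^T. -/
theorem terminal_mpc_recursive_feasibility
    {n m : ℕ} (f : (Fin n → ℝ) → (Fin m → ℝ) → (Fin n → ℝ))
    (X : Set (Fin n → ℝ)) (U : Set (Fin m → ℝ)) (XT : Set (Fin n → ℝ))
    (N : ℕ) (hN : 2 ≤ N) (hXT : XT.Nonempty) (hsub : XT ⊆ X)
    (hCI : ∀ x ∈ XT, ∃ u ∈ U, f x u ∈ XT)
    (x₀ : Fin n → ℝ) (hx₀ : x₀ ∈ terminalFeasSet f X U XT N)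
    (xs : ℕ → (Fin n → ℝ)) (us : ℕ → (Fin m → ℝ))
    (h0 : xs 0 = x₀)
    (hdyn : ∀ i < N, us i ∈ U ∧ xs (i + 1) = f (xs i) (us i))
    (hstate : ∀ i, 1 ≤ i → i < N → xs i ∈ X)
    (hterm : xs N ∈ XT) :
    xs 1 ∈ terminalFeasSet f X U XT N := by
  obtain ⟨u', huU, hfu⟩ := hCI (xs N) hterm
  refine ⟨hstate 1 le_rfl (by omega), fun i => if i < N then xs (i + 1) else f (xs N) u',
    fun i => if i + 1 < N then us (i + 1) else u', ?_, ?_, ?_, ?_⟩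
  · have h0N : (0:ℕ) < N := by omega
    simp [h0N]
  · intro i hi
    simp only [if_pos hi]
    by_cases h : i + 1 < N
    · simp only [if_pos h]
      exact (hdyn (i+1) h)
    · have hiN : i + 1 = N := by omega
      simp only [if_neg h, hiN, lt_irrefl, if_false]
      exact ⟨huU, trivial⟩
  · intro i h1 hi
    simp only [if_pos hi]
    by_cases h : i + 1 < N
    · exact hstate (i+1) (by omega) h
    · have : i + 1 = N := by omega
      rw [this]; exact hsub hterm
  · simp only [lt_irrefl, if_neg (lt_irrefl N)]
    exact hfu
end
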